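/- On L²([0,1]^d), the operator 𝐓(𝐈 − 𝐏)𝐓* equals the integral operator with kernel ∏_{k=1}^d min(xₖ,yₖ) − ∏_{k=1}^d xₖ · ∏_{k=1}^d yₖ, i.e. the covariance operator of the d-dimensional pinned Brownian sheet 𝐁(x) = 𝐖(x) − 𝐖(1)∏ₖ xₖ admits the representation 𝐊_𝐁 = 𝐓(𝐈 − 𝐏)𝐓*. -/

import Mathlib

open MeasureTheory

noncomputable section

/-- Lebesgue measure on the cube `[0,1]^d`, as a measure on `ℝ^d`. -/
def cubeMeasure (d : ℕ) : Measure (Fin d → ℝ) :=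
  Measure.pi fun _ => volume.restrict (Set.Icc (0:ℝ) 1)


instance cubeProb (d : ℕ) : IsProbabilityMeasure (cubeMeasure d) := by
  constructor
  rw [cubeMeasure, Measure.pi_univ]
  simp [Real.volume_Icc]

lemma cube_Icc {d : ℕ} {x : Fin d → ℝ} (hx : ∀ k, x k ∈ Set.Icc (0:ℝ) 1) :
    cubeMeasure d (Set.Icc 0 x) = ENNReal.ofReal (∏ k, x k) := by
  have h : Set.Icc (0 : Fin d → ℝ) x = Set.univ.pi fun k => Set.Icc 0 (x k) := by
    rw [Set.pi_univ_Icc]; rfl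
  rw [h, cubeMeasure, Measure.pi_pi]
  have h2 : ∀ k : Fin d, (volume.restrict (Set.Icc (0:ℝ) 1)) (Set.Icc 0 (x k))
      = ENNReal.ofReal (x k) := by
    intro k
    rw [Measure.restrict_apply measurableSet_Icc, Set.Icc_inter_Icc]
    simp only [sup_idem, max_self]
    rw [Real.volume_Icc]
    congr 1
    rw [min_eq_left (hx k).2]
    ring
  simp_rw [h2]
  rw [ENNReal.ofReal_prod_of_nonneg (fun k _ => (hx k).1)]

lemma ae_cube (d : ℕ) : ∀ᵐ x ∂(cubeMeasure d), ∀ k, x k ∈ Set.Icc (0:ℝ) 1 := by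
  have h1 : cubeMeasure d (Set.univ.pi fun _ : Fin d => Set.Icc (0:ℝ) 1) = 1 := by
    rw [cubeMeasure, Measure.pi_pi]
    simp [Measure.restrict_apply measurableSet_Icc, Real.volume_Icc]
  rw [ae_iff]
  have h2 : {x : Fin d → ℝ | ¬ ∀ k, x k ∈ Set.Icc (0:ℝ) 1}
      = (Set.univ.pi fun _ => Set.Icc (0:ℝ) 1)ᶜ := by
    ext x
    simp only [Set.mem_setOf_eq, Set.mem_compl_iff, Set.mem_pi, Set.mem_univ, true_implies]
  rw [h2, measure_compl (MeasurableSet.univ_pi fun _ => measurableSet_Icc)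
    (measure_ne_top _ _), h1, measure_univ]
  simp


section
variable {α : Type*} [MeasurableSpace α] {E : Type*} [NormedAddCommGroup E]

lemma integrable_snd' {μ : Measure α} [IsProbabilityMeasure μ] {f : α → E}
    (hf : Integrable f μ) : Integrable (fun p : α × α => f p.2) (μ.prod μ) := by
  have hmap : (μ.prod μ).map Prod.snd = μ := by rw [Measure.map_snd_prod]; simp
  have h1 : AEStronglyMeasurable f ((μ.prod μ).map Prod.snd) := by rw [hmap]; exact hf.1
  exact (integrable_map_measure h1 measurable_snd.aemeasurable).1 (by rw [hmap]; exact hf)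

end

lemma key {d : ℕ} {f : (Fin d → ℝ) → ℂ} (hf : Integrable f (cubeMeasure d))
    {x : Fin d → ℝ} (hx : ∀ k, x k ∈ Set.Icc (0:ℝ) 1) :
    ∫ z in Set.Icc 0 x, (∫ y in Set.Icc z 1, f y ∂(cubeMeasure d)) ∂(cubeMeasure d)
      = ∫ y, ((∏ k, min (x k) (y k) : ℝ) : ℂ) * f y ∂(cubeMeasure d) := by
  set μ := cubeMeasure d with hμ
  set S : Set ((Fin d → ℝ) × (Fin d → ℝ)) :=
    {p | p.1 ∈ Set.Icc 0 x ∧ p.1 ≤ p.2 ∧ p.2 ≤ (1 : Fin d → ℝ)} with hSdef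
  have hS : MeasurableSet S := by
    have h1 : MeasurableSet {p : (Fin d → ℝ) × (Fin d → ℝ) | p.1 ∈ Set.Icc 0 x} :=
      measurable_fst measurableSet_Icc
    have h2 : MeasurableSet {p : (Fin d → ℝ) × (Fin d → ℝ) | p.1 ≤ p.2} := by
      have : {p : (Fin d → ℝ) × (Fin d → ℝ) | p.1 ≤ p.2}
          = ⋂ k, {p : (Fin d → ℝ) × (Fin d → ℝ) | p.1 k ≤ p.2 k} := by
        ext p; simp [Pi.le_def]
      rw [this]
      exact MeasurableSet.iInter fun k => measurableSet_le
        measurable_fst.eval measurable_snd.eval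
    have h3 : MeasurableSet {p : (Fin d → ℝ) × (Fin d → ℝ) | p.2 ≤ (1 : Fin d → ℝ)} :=
      measurable_snd measurableSet_Iic
    exact h1.inter (h2.inter h3)
  set g : ((Fin d → ℝ) × (Fin d → ℝ)) → ℂ := S.indicator (fun p => f p.2) with hgdef
  have hgm : AEStronglyMeasurable g (μ.prod μ) := (hf.1.comp_snd).indicator hS
  have hgi : Integrable (Function.uncurry fun z y => g (z, y)) (μ.prod μ) := by
    have hb : Integrable (fun p : (Fin d → ℝ) × (Fin d → ℝ) => ‖f p.2‖) (μ.prod μ) :=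
      integrable_snd' hf.norm
    refine Integrable.mono' hb (by exact hgm) (Filter.Eventually.of_forall fun p => ?_)
    exact norm_indicator_le_norm_self (fun p : (Fin d → ℝ) × (Fin d → ℝ) => f p.2) p
  have stepA : ∫ z in Set.Icc 0 x, (∫ y in Set.Icc z 1, f y ∂μ) ∂μ
      = ∫ z, ∫ y, g (z, y) ∂μ ∂μ := by
    rw [← integral_indicator measurableSet_Icc]
    refine integral_congr_ae (Filter.Eventually.of_forall fun z => ?_)
    by_cases hz : z ∈ Set.Icc (0 : Fin d → ℝ) x
    · rw [Set.indicator_of_mem hz, ← integral_indicator measurableSet_Icc]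
      refine integral_congr_ae (Filter.Eventually.of_forall fun y => ?_)
      by_cases hy : y ∈ Set.Icc z (1 : Fin d → ℝ)
      · rw [Set.indicator_of_mem hy]
        simp only [hgdef]
        exact (Set.indicator_of_mem (show (z, y) ∈ S from ⟨hz, hy.1, hy.2⟩) (fun p : (Fin d → ℝ) × (Fin d → ℝ) => f p.2)).symm
      · rw [Set.indicator_of_notMem hy]
        simp only [hgdef]
        exact (Set.indicator_of_notMem (show (z, y) ∉ S from
          fun h => hy ⟨h.2.1, h.2.2⟩) (fun p : (Fin d → ℝ) × (Fin d → ℝ) => f p.2)).symm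
    · rw [Set.indicator_of_notMem hz]
      have : ∀ y, g (z, y) = 0 := fun y =>
        Set.indicator_of_notMem (fun h : (z, y) ∈ S => hz h.1) (fun p : (Fin d → ℝ) × (Fin d → ℝ) => f p.2)
      simp [this]
  rw [stepA, integral_integral_swap hgi]
  refine integral_congr_ae ?_
  filter_upwards [ae_cube d] with y hy
  have hy1 : y ≤ (1 : Fin d → ℝ) := fun k => (hy k).2
  have hgy : ∀ z, g (z, y)
      = (Set.Icc (0 : Fin d → ℝ) (fun k => min (x k) (y k))).indicator
          (fun _ => f y) z := by
    intro z
    have hiff : (z, y) ∈ S ↔ z ∈ Set.Icc (0 : Fin d → ℝ) (fun k => min (x k) (y k)) := by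
      constructor
      · rintro ⟨⟨h0, hxle⟩, hzy, -⟩
        exact ⟨h0, fun k => le_min (hxle k) (hzy k)⟩
      · rintro ⟨h0, hm⟩
        exact ⟨⟨h0, fun k => (hm k).trans (min_le_left _ _)⟩,
          fun k => (hm k).trans (min_le_right _ _), hy1⟩
    by_cases hm : z ∈ Set.Icc (0 : Fin d → ℝ) (fun k => min (x k) (y k))
    · rw [Set.indicator_of_mem hm]
      simp only [hgdef]
      exact Set.indicator_of_mem (hiff.2 hm) (fun p : (Fin d → ℝ) × (Fin d → ℝ) => f p.2)
    · rw [Set.indicator_of_notMem hm]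
      simp only [hgdef]
      exact Set.indicator_of_notMem (fun h => hm (hiff.1 h)) (fun p : (Fin d → ℝ) × (Fin d → ℝ) => f p.2)
  simp_rw [hgy]
  rw [integral_indicator_const (f y) measurableSet_Icc]
  rw [measureReal_def, show μ (Set.Icc 0 fun k => min (x k) (y k))
      = ENNReal.ofReal (∏ k, min (x k) (y k)) from
    cube_Icc fun k => ⟨le_min (hx k).1 (hy k).1, (min_le_left _ _).trans (hx k).2⟩]
  rw [ENNReal.toReal_ofReal (Finset.prod_nonneg fun k _ => le_min (hx k).1 (hy k).1)]
  rw [Complex.real_smul]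

lemma keyc {d : ℕ} {f : (Fin d → ℝ) → ℂ} (hf : Integrable f (cubeMeasure d)) :
    ∫ z, (∫ y in Set.Icc z 1, f y ∂(cubeMeasure d)) ∂(cubeMeasure d)
      = ∫ y, ((∏ k, y k : ℝ) : ℂ) * f y ∂(cubeMeasure d) := by
  have h1 : (cubeMeasure d).restrict (Set.Icc 0 (1 : Fin d → ℝ)) = cubeMeasure d := by
    refine Measure.restrict_eq_self_of_ae_mem ?_
    filter_upwards [ae_cube d] with z hz
    exact ⟨fun k => (hz k).1, fun k => (hz k).2⟩
  have h2 := key hf (x := 1) (fun k => ⟨zero_le_one, le_refl 1⟩)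
  rw [show (∫ z, (∫ y in Set.Icc z 1, f y ∂(cubeMeasure d)) ∂(cubeMeasure d))
      = ∫ z in Set.Icc 0 (1 : Fin d → ℝ), (∫ y in Set.Icc z 1, f y ∂(cubeMeasure d))
        ∂(cubeMeasure d) by rw [h1]]
  rw [h2]
  refine integral_congr_ae ?_
  filter_upwards [ae_cube d] with y hy
  congr 1
  exact_mod_cast Finset.prod_congr rfl fun k _ => min_eq_right (hy k).2

/-- On `L²([0,1]^d)`, `𝐓(𝐈 - 𝐏)𝐓*` equals the integral operator with kernel
`∏ₖ min(xₖ,yₖ) - ∏ₖ xₖ · ∏ₖ yₖ`, i.e. the covariance operator of the pinned Brownian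
sheet admits the representation `𝐊_𝐁 = 𝐓(𝐈 - 𝐏)𝐓*`. -/
theorem statement4 (d : ℕ) (hd : 1 ≤ d)
    (T Tstar P K : Lp ℂ 2 (cubeMeasure d) →L[ℂ] Lp ℂ 2 (cubeMeasure d))
    (hT : ∀ u : Lp ℂ 2 (cubeMeasure d), ∀ᵐ x ∂(cubeMeasure d),
      T u x = ∫ y in Set.Icc 0 x, u y ∂(cubeMeasure d))
    (hTstar : ∀ u : Lp ℂ 2 (cubeMeasure d), ∀ᵐ x ∂(cubeMeasure d),
      Tstar u x = ∫ y in Set.Icc x 1, u y ∂(cubeMeasure d))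
    (hP : ∀ u : Lp ℂ 2 (cubeMeasure d), ∀ᵐ x ∂(cubeMeasure d),
      P u x = ∫ y, u y ∂(cubeMeasure d))
    (hK : ∀ u : Lp ℂ 2 (cubeMeasure d), ∀ᵐ x ∂(cubeMeasure d),
      K u x = ∫ y, (((∏ k, min (x k) (y k)) - (∏ k, x k) * ∏ k, y k : ℝ) : ℂ)
        * u y ∂(cubeMeasure d)) :
    T ∘L (1 - P) ∘L Tstar = K := by
  refine ContinuousLinearMap.ext fun u => ?_
  refine Lp.ext ?_
  set w : Lp ℂ 2 (cubeMeasure d) := Tstar u with hw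
  set v : Lp ℂ 2 (cubeMeasure d) := (1 - P) w with hv
  have hfu : Integrable (⇑u) (cubeMeasure d) := (Lp.memLp u).integrable one_le_two
  have hfw : Integrable (⇑w) (cubeMeasure d) := (Lp.memLp w).integrable one_le_two
  set c : ℂ := ∫ y, w y ∂(cubeMeasure d) with hc
  -- c in closed form
  have hcval : c = ∫ y, ((∏ k, y k : ℝ) : ℂ) * u y ∂(cubeMeasure d) := by
    rw [hc, integral_congr_ae (hTstar u), keyc hfu]
  -- v a.e. equals w - c
  have hvc : ∀ᵐ z ∂(cubeMeasure d), v z = w z - c := by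
    have h1 : v = w - P w := by
      rw [hv]; simp [ContinuousLinearMap.sub_apply]
    rw [h1]
    filter_upwards [Lp.coeFn_sub w (P w), hP w] with z h2 h3
    rw [h2, Pi.sub_apply, h3]
  have hcomp : (T ∘L (1 - P) ∘L Tstar) u = T v := rfl
  rw [hcomp]
  have hwz := hTstar u
  filter_upwards [hT v, hK u, ae_cube d] with x hTvx hKux hxc
  rw [hTvx, hKux]
  -- integrability of the two kernel pieces
  have hmA : AEStronglyMeasurable
      (fun y => ((∏ k, min (x k) (y k) : ℝ) : ℂ) * u y) (cubeMeasure d) := by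
    refine AEStronglyMeasurable.mul ?_ (Lp.aestronglyMeasurable u)
    exact (Complex.continuous_ofReal.comp (continuous_finset_prod _ fun k _ =>
      continuous_const.min (continuous_apply k))).aestronglyMeasurable
  have hmB : AEStronglyMeasurable
      (fun y => ((∏ k, y k : ℝ) : ℂ) * u y) (cubeMeasure d) := by
    refine AEStronglyMeasurable.mul ?_ (Lp.aestronglyMeasurable u)
    exact (Complex.continuous_ofReal.comp (continuous_finset_prod _ fun k _ =>
      continuous_apply k)).aestronglyMeasurable
  have hbound : ∀ᵐ y ∂(cubeMeasure d),
      ‖((∏ k, min (x k) (y k) : ℝ) : ℂ) * u y‖ ≤ ‖u y‖ ∧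
      ‖((∏ k, y k : ℝ) : ℂ) * u y‖ ≤ ‖u y‖ := by
    filter_upwards [ae_cube d] with y hy
    constructor
    · rw [norm_mul, Complex.norm_real]
      refine mul_le_of_le_one_left (norm_nonneg _) ?_
      rw [Real.norm_eq_abs, abs_of_nonneg (Finset.prod_nonneg fun k _ =>
        le_min (hxc k).1 (hy k).1)]
      exact Finset.prod_le_one (fun k _ => le_min (hxc k).1 (hy k).1)
        (fun k _ => (min_le_right _ _).trans (hy k).2)
    · rw [norm_mul, Complex.norm_real]
      refine mul_le_of_le_one_left (norm_nonneg _) ?_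
      rw [Real.norm_eq_abs, abs_of_nonneg (Finset.prod_nonneg fun k _ => (hy k).1)]
      exact Finset.prod_le_one (fun k _ => (hy k).1) (fun k _ => (hy k).2)
  have hA : Integrable (fun y => ((∏ k, min (x k) (y k) : ℝ) : ℂ) * u y) (cubeMeasure d) :=
    Integrable.mono' hfu.norm hmA (hbound.mono fun y h => h.1)
  have hB : Integrable (fun y => ((∏ k, y k : ℝ) : ℂ) * u y) (cubeMeasure d) :=
    Integrable.mono' hfu.norm hmB (hbound.mono fun y h => h.2)
  -- compute the T side
  have hTside : ∫ z in Set.Icc 0 x, v z ∂(cubeMeasure d)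
      = (∫ y, ((∏ k, min (x k) (y k) : ℝ) : ℂ) * u y ∂(cubeMeasure d))
        - ((∏ k, x k : ℝ) : ℂ) * c := by
    rw [integral_congr_ae (ae_restrict_of_ae hvc)]
    rw [integral_sub hfw.integrableOn (integrableOn_const (measure_ne_top _ _))]
    rw [setIntegral_const]
    rw [integral_congr_ae (ae_restrict_of_ae hwz), key hfu hxc]
    rw [measureReal_def, cube_Icc hxc, ENNReal.toReal_ofReal (Finset.prod_nonneg fun k _ => (hxc k).1)]
    rw [Complex.real_smul]
  rw [hTside, hcval]
  -- compute the K side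
  rw [show (fun y => (((∏ k, min (x k) (y k)) - (∏ k, x k) * ∏ k, y k : ℝ) : ℂ) * u y)
      = fun y => ((∏ k, min (x k) (y k) : ℝ) : ℂ) * u y
        - ((∏ k, x k : ℝ) : ℂ) * (((∏ k, y k : ℝ) : ℂ) * u y) from
    funext fun y => by push_cast; ring]
  rw [integral_sub hA (hB.const_mul _), integral_const_mul]
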